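/- arXiv:2407.21044 — 4 statements merged into one kernel-verified Lean document; each statement's English description precedes it below -/
import Mathlib

section
/- Let 𝔤 be a finite-dimensional real Lie algebra with inner product ⟨·,·⟩, X ∈ 𝔤 nonzero with ‖X‖ < 1, and g_X(v,z) = (⟨v,z⟩ + ⟨X,v⟩⟨X,z⟩/‖X‖)(1+‖X‖). Then the conditions (a) ⟨X,[y,z]⟩ = 0 and ⟨[y,X],z⟩ + ⟨[z,X],y⟩ = 0 for all y,z hold if and only if the conditions (b) g_X(X,[y,z]) = 0 and g_X([y,X],z) + g_X([z,X],y) = 0 for all y,z hold. -/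
open RealInnerProductSpace

theorem stmt_8 {g : Type*} [LieRing g] [LieAlgebra ℝ g]
    [NormedAddCommGroup g] [InnerProductSpace ℝ g] [FiniteDimensional ℝ g]
    (X : g) (hX : X ≠ 0) (hX1 : ‖X‖ < 1)
    (gX : g → g → ℝ)
    (hgX : ∀ v z, gX v z = (⟪v, z⟫ + ⟪X, v⟫ * ⟪X, z⟫ / ‖X‖) * (1 + ‖X‖)) :
    ((∀ y z : g, ⟪X, ⁅y, z⁆⟫ = 0) ∧
      (∀ y z : g, ⟪⁅y, X⁆, z⟫ + ⟪⁅z, X⁆, y⟫ = 0)) ↔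
    ((∀ y z : g, gX X ⁅y, z⁆ = 0) ∧
      (∀ y z : g, gX ⁅y, X⁆ z + gX ⁅z, X⁆ y = 0)) := by
  by_cases hX0 : ‖X‖ = 0
  · have hX0' := norm_eq_zero.mp hX0
    have hgX' : ∀ v z, gX v z = ⟪v, z⟫ := by
      intro v z; rw [hgX, hX0]; simp [hX0']
    simp only [hgX', hX0', inner_zero_left]
  have hn : (0:ℝ) < ‖X‖ := lt_of_le_of_ne (norm_nonneg X) (Ne.symm hX0)
  have hn' : ‖X‖ ≠ 0 := ne_of_gt hn
  have hp : (1:ℝ) + ‖X‖ ≠ 0 := by positivity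
  have hself : ⟪X, X⟫ = ‖X‖ * ‖X‖ := real_inner_self_eq_norm_mul_norm X
  constructor
  · rintro ⟨h1, h2⟩
    refine ⟨fun y z => ?_, fun y z => ?_⟩
    · rw [hgX, h1]; simp
    · rw [hgX, hgX]
      have e1 : ⟪X, ⁅y, X⁆⟫ = 0 := h1 y X
      have e2 : ⟪X, ⁅z, X⁆⟫ = 0 := h1 z X
      have e3 := h2 y z
      rw [e1, e2]
      ring_nf
      nlinarith [e3]
  · rintro ⟨h1, h2⟩
    have h1' : ∀ y z : g, ⟪X, ⁅y, z⁆⟫ = 0 := by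
      intro y z
      have := h1 y z
      rw [hgX, hself] at this
      have := mul_eq_zero.mp this
      rcases this with h | h
      · field_simp at h
        nlinarith [h]
      · exact absurd h hp
    refine ⟨h1', fun y z => ?_⟩
    have := h2 y z
    rw [hgX, hgX, h1' y X, h1' z X] at this
    have h' : (⟪⁅y, X⁆, z⟫ + ⟪⁅z, X⁆, y⟫) * (1 + ‖X‖) = 0 := by
      ring_nf at this ⊢; linarith
    exact (mul_eq_zero.mp h').resolve_right hp
end

section
/- Let 𝔤 be a finite-dimensional real Lie algebra with inner product ⟨·,·⟩, X ∈ 𝔤 nonzero with ‖X‖ < 1, and g_X as above. Suppose v ∈ 𝔤 satisfies ⟨v,[v,y]⟩ = 0 for all y ∈ 𝔤 (v is a geodesic vector for ⟨·,·⟩). Then g_X(v,[v,y]) = 0 for all y ∈ 𝔤 if and only if ad_v* X = 0 or ⟨X,v⟩ = 0, where ad_v* is the adjoint of ad_v with respect to ⟨·,·⟩. -/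
open RealInnerProductSpace

theorem stmt_9 {g : Type*} [LieRing g] [LieAlgebra ℝ g]
    [NormedAddCommGroup g] [InnerProductSpace ℝ g] [FiniteDimensional ℝ g]
    (X : g) (hX : X ≠ 0) (hX1 : ‖X‖ < 1)
    (gX : g → g → ℝ)
    (hgX : ∀ v z, gX v z = (⟪v, z⟫ + ⟪X, v⟫ * ⟪X, z⟫ / ‖X‖) * (1 + ‖X‖))
    (v : g) (hgeo : ∀ y : g, ⟪v, ⁅v, y⁆⟫ = 0) :
    (∀ y : g, gX v ⁅v, y⁆ = 0) ↔
      ((∀ y : g, ⟪X, ⁅v, y⁆⟫ = 0) ∨ ⟪X, v⟫ = 0) := by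
  have hXn : (0:ℝ) ≤ ‖X‖ := norm_nonneg X
  have h1 : (0:ℝ) < 1 + ‖X‖ := by linarith
  constructor
  · intro h
    by_cases hXv : ⟪X, v⟫ = 0
    · exact Or.inr hXv
    · left
      intro y
      have := h y
      rw [hgX, hgeo y] at this
      have h2 : ⟪X, v⟫ * ⟪X, ⁅v, y⁆⟫ / ‖X‖ = 0 := by
        rcases mul_eq_zero.mp this with h' | h'
        · linarith
        · linarith
      have h3 : ⟪X, v⟫ * ⟪X, ⁅v, y⁆⟫ = 0 := by
        have hn : ‖X‖ ≠ 0 := fun h0 => hXv (by rw [norm_eq_zero.mp h0, inner_zero_left])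
        exact (div_eq_zero_iff.mp h2).resolve_right hn
      rcases mul_eq_zero.mp h3 with h' | h'
      · exact absurd h' hXv
      · exact h'
  · intro h y
    rw [hgX, hgeo y]
    rcases h with h | h
    · rw [h y]; ring
    · rw [h]; ring
end

section
/- Let 𝔤 be a finite-dimensional real Lie algebra with inner product ⟨·,·⟩, X ∈ 𝔤 nonzero with ‖X‖ < 1, and g_X as above. Suppose v ∈ 𝔤 satisfies ⟨[v,y],z⟩ + ⟨y,[v,z]⟩ = 0 for all y,z ∈ 𝔤 (v is a Killing vector for ⟨·,·⟩). Then g_X([v,y],z) + g_X(y,[v,z]) = 0 for all y,z ∈ 𝔤 if and only if ⟨X,[v,y]⟩ = 0 for all y ∈ 𝔤. -/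
open RealInnerProductSpace

theorem stmt_10 {g : Type*} [LieRing g] [LieAlgebra ℝ g]
    [NormedAddCommGroup g] [InnerProductSpace ℝ g] [FiniteDimensional ℝ g]
    (X : g) (hX : X ≠ 0) (hX1 : ‖X‖ < 1)
    (gX : g → g → ℝ)
    (hgX : ∀ v z, gX v z = (⟪v, z⟫ + ⟪X, v⟫ * ⟪X, z⟫ / ‖X‖) * (1 + ‖X‖))
    (v : g) (hkill : ∀ y z : g, ⟪⁅v, y⁆, z⟫ + ⟪y, ⁅v, z⁆⟫ = 0) :
    (∀ y z : g, gX ⁅v, y⁆ z + gX y ⁅v, z⁆ = 0) ↔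
      (∀ y : g, ⟪X, ⁅v, y⁆⟫ = 0) := by
  rcases (norm_nonneg X).eq_or_lt with h0 | hp
  · have hi : ∀ w : g, ⟪X, w⟫ = 0 := fun w => by rw [norm_eq_zero.1 h0.symm, inner_zero_left]
    refine ⟨fun _ y => hi _, fun _ y z => ?_⟩
    simp only [hgX, hi, ← h0, mul_zero, zero_div, add_zero, mul_one]
    linarith [hkill y z]
  have hn : ‖X‖ ≠ 0 := ne_of_gt hp
  have hXX : ⟪X, X⟫ = ‖X‖ * ‖X‖ := real_inner_self_eq_norm_mul_norm X
  have hvXX : ⟪X, ⁅v, X⁆⟫ = 0 := by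
    have hk := hkill X X
    have hsym : ⟪⁅v, X⁆, X⟫ = ⟪X, ⁅v, X⁆⟫ := real_inner_comm _ _
    linarith
  constructor
  · intro h y
    have h1 := h y X
    rw [hgX, hgX] at h1
    have hk := hkill y X
    rw [hvXX, hXX] at h1
    have h2 : ⟪X, ⁅v, y⁆⟫ * ‖X‖ * (1 + ‖X‖) = 0 := by
      field_simp at h1
      nlinarith [h1, hk]
    have hq : ‖X‖ * (1 + ‖X‖) ≠ 0 := by positivity
    have h4 : (⟪X, ⁅v, y⁆⟫ : ℝ) * (‖X‖ * (1 + ‖X‖)) = 0 := by linarith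
    rcases mul_eq_zero.1 h4 with h3 | h3
    · exact h3
    · exact absurd h3 hq
  · intro h y z
    rw [hgX, hgX, h y, h z]
    have hk := hkill y z
    field_simp
    linear_combination (‖X‖ ^ 2 + ‖X‖) * hk
end

section
/- Let 𝔤 be a finite-dimensional real Lie algebra with inner product ⟨·,·⟩, X ∈ 𝔤 nonzero with ‖X‖ < 1. Assume ⟨X,[y,z]⟩ = 0 and ⟨[y,X],z⟩ + ⟨[z,X],y⟩ = 0 for all y,z ∈ 𝔤 (Berwald conditions). Then the Levi-Civita connection of g_X coincides with the Levi-Civita connection of ⟨·,·⟩: for all y,z ∈ 𝔤, ∇_y z = ∇̄_y z, where both are defined by the respective Koszul formulas. -/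
open RealInnerProductSpace

/-- Negation coming from the `LieRing` additive group structure. -/
def Lneg {g : Type*} [LieRing g] (x : g) : g := -x

lemma Lneg_bracket {g : Type*} [LieRing g] (a b : g) : Lneg ⁅a, b⁆ = ⁅b, a⁆ :=
  lie_skew b a

lemma bracket_Lneg_left {g : Type*} [LieRing g] (a b : g) :
    ⁅Lneg a, b⁆ = Lneg ⁅a, b⁆ := neg_lie a b

lemma bracket_Lneg_right {g : Type*} [LieRing g] (a b : g) :
    ⁅a, Lneg b⁆ = Lneg ⁅a, b⁆ := lie_neg a b

lemma Ltorsion {g : Type*} [LieRing g] [LieAlgebra ℝ g] (X u : g)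
    (h : Lneg u = u) : u = ⁅X, X⁆ := by
  have h' : -u = u := h
  have h0 : u + u = 0 := by nth_rewrite 1 [← h']; exact neg_add_cancel u
  have h2 : (2 : ℝ) • u = 0 := by rw [two_smul]; exact h0
  have h3 : u = 0 := by
    have := congrArg (fun t : g => ((2 : ℝ)⁻¹) • t) h2
    simpa [smul_smul] using this
  rw [h3, lie_self]

theorem stmt_14 {g : Type*} [LieRing g] [LieAlgebra ℝ g]
    [NormedAddCommGroup g] [InnerProductSpace ℝ g] [FiniteDimensional ℝ g]
    (X : g) (hX : X ≠ 0) (hX1 : ‖X‖ < 1)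
    (hBerwald1 : ∀ y z : g, ⟪X, ⁅y, z⁆⟫ = 0)
    (hBerwald2 : ∀ y z : g, ⟪⁅y, X⁆, z⟫ + ⟪⁅z, X⁆, y⟫ = 0)
    (gX : g → g → ℝ)
    (hgX : ∀ v z, gX v z = (⟪v, z⟫ + ⟪X, v⟫ * ⟪X, z⟫ / ‖X‖) * (1 + ‖X‖))
    (nablaBar : g → g → g)
    (hKoszulBar : ∀ y z w : g,
      ⟪nablaBar y z, w⟫ =
        (1 / 2) * (⟪⁅y, z⁆, w⟫ - ⟪⁅z, w⁆, y⟫ + ⟪⁅w, y⁆, z⟫))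
    (nabla : g → g → g)
    (hKoszul : ∀ y z w : g,
      gX (nabla y z) w =
        (1 / 2) * (gX ⁅y, z⁆ w - gX ⁅z, w⁆ y + gX ⁅w, y⁆ z)) :
    ∀ y z : g, nabla y z = nablaBar y z := by
  intro y z
  have hXpos : (0:ℝ) ≤ ‖X‖ := norm_nonneg X
  have h1pos : (0:ℝ) < 1 + ‖X‖ := by linarith
  have h1ne : (1 + ‖X‖ : ℝ) ≠ 0 := ne_of_gt h1pos
  -- inner products with ⁅X,X⁆ vanish
  have hXX : ∀ w : g, ⟪(⁅X, X⁆ : g), w⟫ = 0 := by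
    intro w
    have h1 := hBerwald2 X w
    have h2 : ⟪⁅w, X⁆, X⟫ = 0 := by rw [real_inner_comm]; exact hBerwald1 w X
    linarith
  -- a ↦ ⁅a, X⁆ is additive for the normed group structure
  letI instNAdd : Add g := (inferInstance : NormedAddCommGroup g).toAdd
  have Hadd : ∀ a b : g, ⁅a + b, X⁆ = ⁅a, X⁆ + ⁅b, X⁆ := by
    intro a b
    apply ext_inner_right ℝ
    intro w
    have h1 := hBerwald2 (a + b) w
    have h2 := hBerwald2 a w
    have h3 := hBerwald2 b w
    have h4 : ⟪⁅w, X⁆, a + b⟫ = ⟪⁅w, X⁆, a⟫ + ⟪⁅w, X⁆, b⟫ :=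
      inner_add_right _ _ _
    have h5 : ⟪⁅a, X⁆ + ⁅b, X⁆, w⟫ = ⟪⁅a, X⁆, w⟫ + ⟪⁅b, X⁆, w⟫ :=
      inner_add_left _ _ _
    linarith
  -- formula for ⟪⁅X,w⁆, t⟫ coming from the Koszul identity
  have hIw : ∀ w t : g, ⟪⁅X, w⁆, t⟫ = ⟪⁅t, X⁆, w⟫ - 2 * ⟪nablaBar t X, w⟫ := by
    intro w t
    have h1 := hKoszulBar t X w
    have h2 : ⟪⁅w, t⁆, X⟫ = 0 := by rw [real_inner_comm]; exact hBerwald1 w t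
    linarith
  -- a ↦ ⁅X, a⁆ is additive for the normed group structure
  have H'add : ∀ a b : g, ⁅X, a + b⁆ = ⁅X, a⁆ + ⁅X, b⁆ := by
    intro a b
    apply ext_inner_right ℝ
    intro t
    have hA := hIw (a + b) t
    have hB := hIw a t
    have hC := hIw b t
    have e : ⟪⁅X, a⁆ + ⁅X, b⁆, t⟫ = ⟪⁅X, a⁆, t⟫ + ⟪⁅X, b⁆, t⟫ :=
      inner_add_left _ _ _
    have f1 : ⟪⁅t, X⁆, a + b⟫ = ⟪⁅t, X⁆, a⟫ + ⟪⁅t, X⁆, b⟫ :=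
      inner_add_right _ _ _
    have f2 : ⟪nablaBar t X, a + b⟫ = ⟪nablaBar t X, a⟫ + ⟪nablaBar t X, b⟫ :=
      inner_add_right _ _ _
    linarith
  -- key vector identity : ⁅y,X⁆ + ⁅X,y⁆ = ⁅X,X⁆
  have main : ∀ y' : g, (⁅y', X⁆ + ⁅X, y'⁆ : g) = ⁅X, X⁆ := by
    intro y'
    have c1 : ⁅X, y'⁆ = ⁅Lneg y', X⁆ := by
      rw [bracket_Lneg_left, Lneg_bracket]
    have c2 : ⁅y', X⁆ + ⁅X, y'⁆ = ⁅y' + Lneg y', X⁆ := by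
      rw [Hadd, ← c1]
    have c3' : ⁅X, y' + Lneg y'⁆ = ⁅y', X⁆ + ⁅X, y'⁆ := by
      rw [H'add, bracket_Lneg_right, Lneg_bracket]
      exact @add_comm g (NormedAddCommGroup.toAddCommGroup (E := g)).toAddCommMagma _ _
    have c4 : Lneg (⁅y', X⁆ + ⁅X, y'⁆) = ⁅y', X⁆ + ⁅X, y'⁆ := by
      rw [c2, Lneg_bracket, c3']
      exact c2
    exact Ltorsion X _ c4
  -- orthogonality of nablaBar y z to X
  have hbarX : ⟪nablaBar y z, X⟫ = 0 := by
    have h1 := hKoszulBar y z X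
    have h2 : ⟪⁅y, z⁆, X⟫ = 0 := by rw [real_inner_comm]; exact hBerwald1 y z
    have h3 := hBerwald2 y z
    have h4 : ⟪⁅y, X⁆, z⟫ + ⟪⁅X, y⁆, z⟫ = 0 := by
      have h5 := congrArg (fun v : g => ⟪v, z⟫) (main y)
      rw [inner_add_left, hXX z] at h5
      exact h5
    linarith
  -- gX Koszul formula collapses thanks to Berwald condition 1
  have key : ∀ w : g, gX (nabla y z) w = (1 + ‖X‖) * ⟪nablaBar y z, w⟫ := by
    intro w
    have e1 : gX ⁅y, z⁆ w = ⟪⁅y, z⁆, w⟫ * (1 + ‖X‖) := by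
      rw [hgX, hBerwald1]; ring
    have e2 : gX ⁅z, w⁆ y = ⟪⁅z, w⁆, y⟫ * (1 + ‖X‖) := by
      rw [hgX, hBerwald1]; ring
    have e3 : gX ⁅w, y⁆ z = ⟪⁅w, y⁆, z⟫ * (1 + ‖X‖) := by
      rw [hgX, hBerwald1]; ring
    rw [hKoszul, e1, e2, e3, hKoszulBar]
    ring
  -- the new connection is also orthogonal to X
  have hnX : ⟪nabla y z, X⟫ = 0 := by
    have h := key X
    rw [hgX] at h
    have hc : ⟪X, nabla y z⟫ = ⟪nabla y z, X⟫ := real_inner_comm _ _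
    rw [hc, hbarX, real_inner_self_eq_norm_mul_norm] at h
    have ha : ⟪nabla y z, X⟫ * ((1 + ‖X‖) * (1 + ‖X‖)) = 0 := by
      have hx : ⟪nabla y z, X⟫ * (‖X‖ * ‖X‖) / ‖X‖ = ⟪nabla y z, X⟫ * ‖X‖ := by
        rw [mul_div_assoc, mul_self_div_self]
      rw [hx] at h
      linear_combination h
    rcases mul_eq_zero.mp ha with h' | h'
    · exact h'
    · exact absurd h' (by positivity)
  -- the two connections have the same inner products
  apply ext_inner_right ℝ
  intro w
  have h := key w
  rw [hgX] at h
  have hc : ⟪X, nabla y z⟫ = ⟪nabla y z, X⟫ := real_inner_comm _ _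
  rw [hc, hnX] at h
  have : (⟪nabla y z, w⟫ - ⟪nablaBar y z, w⟫) * (1 + ‖X‖) = 0 := by
    linear_combination h
  rcases mul_eq_zero.mp this with h' | h'
  · linarith [h']
  · exact absurd h' h1ne
end
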